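/- For all a > 0 and B > 0 there exists ρ > 0 with the following property: for every sequence (b_j)_{j≥1} of real numbers with |b_j| ≤ B for all j and limsup_{n→∞} (1/n)·Σ_{j=1}^{n} b_j < -a, the set H = {n ≥ 1 : Σ_{j=n-k+1}^{n} b_j ≤ -(a/2)·k for every integer k with 1 ≤ k ≤ n} satisfies liminf_{n→∞} #(H ∩ {1, …, n})/n ≥ ρ; in particular H is infinite. -/
import Mathlib

open Filter

/-- The set of `(a/2)`-hyperbolic times of a sequence `(b_j)_{j ≥ 1}`: those `n ≥ 1` with
`Σ_{j=n-k+1}^{n} b_j ≤ -(a/2)·k` for every `1 ≤ k ≤ n`. -/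
def hypTimes (a : ℝ) (b : ℕ → ℝ) : Set ℕ :=
  {n : ℕ | 1 ≤ n ∧ ∀ k : ℕ, 1 ≤ k → k ≤ n →
    ∑ j ∈ Finset.Icc (n - k + 1) n, b j ≤ -(a / 2) * k}

/-- Splitting of the "drifted" partial sums. -/
lemma pliss_SSdiff (a : ℝ) (b : ℕ → ℝ) {m n : ℕ} (h : m ≤ n) :
    ∑ j ∈ Finset.Ioc 0 n, (b j + a / 2) =
      ∑ j ∈ Finset.Ioc 0 m, (b j + a / 2)
        + (∑ j ∈ Finset.Ioc m n, b j + a / 2 * ((n : ℝ) - (m : ℝ))) := by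
  rw [← Finset.sum_Ioc_consecutive _ (Nat.zero_le m) h]
  have h1 : ∑ j ∈ Finset.Ioc m n, (b j + a / 2)
      = ∑ j ∈ Finset.Ioc m n, b j + ((Finset.Ioc m n).card : ℝ) * (a / 2) := by
    rw [Finset.sum_add_distrib, Finset.sum_const, nsmul_eq_mul]
  rw [h1, Nat.card_Ioc]
  have : ((n - m : ℕ) : ℝ) = (n : ℝ) - (m : ℝ) := by
    push_cast [h]; ring
  rw [this]; ring

/-- Hyperbolic times are record minima of the drifted partial sums. -/
lemma pliss_mem_iff (a : ℝ) (b : ℕ → ℝ) {n : ℕ} (hn : 1 ≤ n) :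
    n ∈ hypTimes a b ↔ ∀ m < n,
      ∑ j ∈ Finset.Ioc 0 n, (b j + a / 2) ≤ ∑ j ∈ Finset.Ioc 0 m, (b j + a / 2) := by
  constructor
  · rintro ⟨-, h⟩ m hm
    have hk := h (n - m) (by omega) (by omega)
    rw [show n - (n - m) + 1 = m + 1 by omega, Finset.Icc_add_one_left_eq_Ioc] at hk
    have hd := pliss_SSdiff a b (le_of_lt hm)
    have hc : ((n - m : ℕ) : ℝ) = (n : ℝ) - (m : ℝ) := by
      push_cast [le_of_lt hm]; ring
    rw [hc] at hk
    linarith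
  · intro h
    refine ⟨hn, fun k hk1 hkn => ?_⟩
    have hm : n - k < n := by omega
    have hd := pliss_SSdiff a b (le_of_lt hm)
    have h2 := h (n - k) hm
    rw [show n - k + 1 = (n - k) + 1 from rfl, Finset.Icc_add_one_left_eq_Ioc]
    have hc : ((n : ℝ) - ((n - k : ℕ) : ℝ)) = (k : ℝ) := by
      have : ((n - k : ℕ) : ℝ) = (n : ℝ) - (k : ℝ) := by
        push_cast [hkn]; ring
      rw [this]; ring
    rw [hc] at hd
    linarith

/-- Pliss lemma: for all `a, B > 0` there is `ρ > 0` such that any sequence bounded by `B`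
with `limsup (1/n)·Σ_{j=1}^n b_j < -a` has a set of `(a/2)`-hyperbolic times of lower density
at least `ρ`; in particular this set is infinite. -/
theorem pliss_hyperbolic_times (a B : ℝ) (ha : 0 < a) (hB : 0 < B) :
    ∃ ρ : ℝ, 0 < ρ ∧ ∀ b : ℕ → ℝ,
      (∀ j : ℕ, 1 ≤ j → |b j| ≤ B) →
      limsup (fun n : ℕ => (1 / (n : ℝ)) * ∑ j ∈ Finset.Icc 1 n, b j) atTop < -a →
      (ρ ≤ liminf
          (fun n : ℕ => ((hypTimes a b ∩ Set.Icc 1 n).ncard : ℝ) / (n : ℝ)) atTop ∧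
        (hypTimes a b).Infinite) := by
  classical
  set D : ℝ := B + a / 2 with hD
  have hD0 : 0 < D := by positivity
  refine ⟨a / 2 / D, by positivity, fun b hb hlim => ?_⟩
  set ρ : ℝ := a / 2 / D with hρ
  have hρ0 : 0 < ρ := by positivity
  set S : ℕ → ℝ := fun n => ∑ j ∈ Finset.Ioc 0 n, (b j + a / 2) with hS
  set cnt : ℕ → ℕ := fun n => ((Finset.Icc 1 n).filter (· ∈ hypTimes a b)).card with hcnt
  clear_value D ρ S cnt
  -- the counting invariant
  have hinv : ∀ n : ℕ, ∀ k ≤ n, -((cnt n : ℝ) * D) ≤ S k := by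
    intro n
    induction n with
    | zero =>
      intro k hk
      interval_cases k
      simp [hS, hcnt]
    | succ n ih =>
      have hmono : cnt n ≤ cnt (n + 1) := by
        simp only [hcnt]
        apply Finset.card_le_card
        apply Finset.filter_subset_filter
        exact Finset.Icc_subset_Icc_right (Nat.le_succ n)
      intro k hk
      rcases Nat.lt_or_ge k (n + 1) with hk' | hk'
      · have := ih k (by omega)
        have : -((cnt (n+1) : ℝ) * D) ≤ -((cnt n : ℝ) * D) := by
          have : (cnt n : ℝ) ≤ cnt (n+1) := by exact_mod_cast hmono
          nlinarith
        linarith [ih k (by omega)]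
      · have hkn : k = n + 1 := by omega
        subst hkn
        have hSsucc : S (n + 1) = S n + (b (n + 1) + a / 2) := by
          simp only [hS]
          rw [Finset.sum_Ioc_succ_top (Nat.zero_le n)]
        by_cases hH : (n + 1) ∈ hypTimes a b
        · -- count goes up by one, S drops by at most D
          have hcard : cnt (n + 1) = cnt n + 1 := by
            simp only [hcnt]
            rw [← Finset.insert_Icc_right_eq_Icc_add_one (by omega : 1 ≤ n + 1),
              Finset.filter_insert, if_pos hH,
              Finset.card_insert_of_notMem (by
                simp only [Finset.mem_filter, Finset.mem_Icc]
                omega)]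
          have hbnd : |b (n + 1)| ≤ B := hb (n + 1) (by omega)
          have h1 : -B ≤ b (n + 1) := by
            have := abs_le.mp hbnd; linarith [this.1]
          have h2 := ih n le_rfl
          rw [hD] at h2
          rw [hcard, hSsucc]
          push_cast
          nlinarith [ha.le, h2, h1]
        · -- S (n+1) exceeds some earlier value
          have := (pliss_mem_iff a b (by omega : 1 ≤ n + 1)).not.mp hH
          push_neg at this
          obtain ⟨m, hm, hlt⟩ := this
          have h2 := ih m (by omega)
          have hSm : S m < S (n + 1) := by simp only [hS]; exact hlt
          have : -((cnt (n+1) : ℝ) * D) ≤ -((cnt n : ℝ) * D) := by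
            have : (cnt n : ℝ) ≤ cnt (n+1) := by exact_mod_cast hmono
            nlinarith
          linarith
  -- the averages are bounded above
  have hbdd : IsBoundedUnder (· ≤ ·) atTop
      (fun n : ℕ => (1 / (n : ℝ)) * ∑ j ∈ Finset.Icc 1 n, b j) := by
    refine isBoundedUnder_of ⟨B, fun n => ?_⟩
    rcases Nat.eq_zero_or_pos n with rfl | hn
    · simp [hB.le]
    · have hsum : ∑ j ∈ Finset.Icc 1 n, b j ≤ (n : ℝ) * B := by
        calc ∑ j ∈ Finset.Icc 1 n, b j ≤ ∑ j ∈ Finset.Icc 1 n, B := by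
              apply Finset.sum_le_sum
              intro j hj
              have := hb j (Finset.mem_Icc.mp hj).1
              linarith [abs_le.mp this]
          _ = (n : ℝ) * B := by
              rw [Finset.sum_const, nsmul_eq_mul, Nat.card_Icc]
              norm_num
      have hn' : (0 : ℝ) < n := by exact_mod_cast hn
      rw [one_div, inv_mul_le_iff₀ hn']
      linarith
  -- eventually the average is < -a
  have hev : ∀ᶠ n : ℕ in atTop,
      (1 / (n : ℝ)) * ∑ j ∈ Finset.Icc 1 n, b j < -a :=
    eventually_lt_of_limsup_lt hlim hbdd
  -- eventually ρ ≤ cnt n / n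
  have hkey : ∀ᶠ n : ℕ in atTop, ρ ≤ (cnt n : ℝ) / n := by
    filter_upwards [hev, eventually_ge_atTop 1] with n hn hn1
    have hn' : (0 : ℝ) < n := by exact_mod_cast hn1
    -- S n ≤ -(a/2) n
    have hSn : S n ≤ -(a / 2) * n := by
      have hsum : ∑ j ∈ Finset.Icc 1 n, b j ≤ -a * n := by
        rw [one_div] at hn
        have h4 := (inv_mul_lt_iff₀ hn').mp hn
        nlinarith [h4]
      have hIoc : Finset.Ioc 0 n = Finset.Icc 1 n := (Finset.Icc_add_one_left_eq_Ioc 0 n).symm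
      have : S n = ∑ j ∈ Finset.Icc 1 n, b j + (n : ℝ) * (a / 2) := by
        simp only [hS, hIoc]
        rw [Finset.sum_add_distrib, Finset.sum_const, nsmul_eq_mul, Nat.card_Icc]
        have : ((n + 1 - 1 : ℕ) : ℝ) = (n : ℝ) := by push_cast; ring
        rw [this]
      rw [this]
      linarith
    have h1 := hinv n n le_rfl
    -- -(cnt n * D) ≤ S n ≤ -(a/2) n  ⇒  (a/2) n ≤ cnt n * D
    have h2 : a / 2 * n ≤ (cnt n : ℝ) * D := by nlinarith [h1, hSn]
    rw [hρ, div_le_div_iff₀ hD0 hn']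
    linarith [h2]
  -- identify the set cardinality with cnt
  have hcard : ∀ n : ℕ, ((hypTimes a b ∩ Set.Icc 1 n).ncard : ℝ) = (cnt n : ℝ) := by
    intro n
    congr 1
    have hset : hypTimes a b ∩ Set.Icc 1 n
        = ↑((Finset.Icc 1 n).filter (· ∈ hypTimes a b)) := by
      ext m
      simp only [Set.mem_inter_iff, Set.mem_Icc, Finset.coe_filter, Finset.mem_Icc,
        Set.mem_setOf_eq]
      tauto
    rw [hset, Set.ncard_coe_finset, hcnt]
  have hkey' : ∀ᶠ n : ℕ in atTop,
      ρ ≤ ((hypTimes a b ∩ Set.Icc 1 n).ncard : ℝ) / n := by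
    filter_upwards [hkey] with n hn
    rw [hcard n]; exact hn
  constructor
  · -- liminf bound
    apply le_liminf_of_le _ hkey'
    apply IsBoundedUnder.isCoboundedUnder_ge
    refine isBoundedUnder_of ⟨1, fun n => ?_⟩
    rcases Nat.eq_zero_or_pos n with rfl | hn
    · simp
    · have hn' : (0 : ℝ) < n := by exact_mod_cast hn
      rw [div_le_one hn', hcard n]
      have : cnt n ≤ n := by
        simp only [hcnt]
        calc ((Finset.Icc 1 n).filter (· ∈ hypTimes a b)).card
            ≤ (Finset.Icc 1 n).card := Finset.card_filter_le _ _
          _ = n := by rw [Nat.card_Icc]; omega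
      exact_mod_cast this
  · -- infiniteness
    by_contra hfin
    rw [Set.not_infinite] at hfin
    set C : ℕ := hfin.toFinset.card with hC
    have hle : ∀ n : ℕ, cnt n ≤ C := by
      intro n
      simp only [hcnt, hC]
      apply Finset.card_le_card
      intro m hm
      simp only [Set.Finite.mem_toFinset]
      exact (Finset.mem_filter.mp hm).2
    obtain ⟨N1, hN1⟩ := eventually_atTop.mp hkey
    obtain ⟨M, hM⟩ := exists_nat_gt ((C : ℝ) / ρ)
    set n := max N1 (M + 1) with hn
    have h1 : ρ ≤ (cnt n : ℝ) / n := hN1 n (le_max_left _ _)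
    have hn1 : (M + 1 : ℕ) ≤ n := le_max_right _ _
    have hn' : (0 : ℝ) < n := by
      have : (1 : ℕ) ≤ n := le_trans (by omega) hn1
      exact_mod_cast this
    have h2 : (cnt n : ℝ) ≤ C := by exact_mod_cast hle n
    have h3 : ρ * n ≤ C := by
      have hmul : ρ * n ≤ (cnt n : ℝ) / n * n :=
        mul_le_mul_of_nonneg_right h1 (le_of_lt hn')
      have heq : (cnt n : ℝ) / n * n = (cnt n : ℝ) := by field_simp
      rw [heq] at hmul
      linarith
    have h4 : (n : ℝ) ≤ (C : ℝ) / ρ := by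
      rw [le_div_iff₀ hρ0]; linarith
    have h5 : ((M : ℝ)) < n := by
      have : (M + 1 : ℕ) ≤ n := hn1
      have := (Nat.cast_le (α := ℝ)).mpr this
      push_cast at this
      linarith
    linarith
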